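/- Let C ⊆ Rⁿ be a linear code of length n over R. If C is self-orthogonal, i.e., Σᵢ xᵢ·yᵢ = 0 in R for all x, y ∈ C, then its Gray image Φ(C) ⊆ (ZMod 2)^{3n} is self-orthogonal with respect to the standard inner product over ZMod 2: Σ_j Φ(x)_j · Φ(y)_j = 0 for all x, y ∈ C. -/

import Mathlib

open Polynomial

set_option synthInstance.maxHeartbeats 1000000
set_option maxHeartbeats 1000000

noncomputable section

/-- The ring `R = F₂ + uF₂ + u²F₂` with `u³ = u`, realized as `(ZMod 2)[X] ⧸ ⟨X³ - X⟩`. -/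
abbrev R : Type := Polynomial (ZMod 2) ⧸ Ideal.span ({X ^ 3 - X} : Set (Polynomial (ZMod 2)))

/-- `u` is the residue class of `X` in `R`. -/
def u : R := Ideal.Quotient.mk _ (X : Polynomial (ZMod 2))

/-- The element `a + u·b + u²·c` of `R`. -/
def elt (a b c : ZMod 2) : R :=
  algebraMap (ZMod 2) R a + algebraMap (ZMod 2) R b * u + algebraMap (ZMod 2) R c * u ^ 2

/-- `Φ` is the Gray map: `Φ(a + u·b + u²·c) = (a, a + c, b)`. -/
def GraySpec (Φ : R → Fin 3 → ZMod 2) : Prop :=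
  ∀ a b c : ZMod 2, Φ (elt a b c) = ![a, a + c, b]

/-- The coordinatewise extension of the Gray map, `Rⁿ → (ZMod 2)^{3n}`. -/
def grayExt (Φ : R → Fin 3 → ZMod 2) (n : ℕ) (x : Fin n → R) :
    Fin n × Fin 3 → ZMod 2 :=
  fun p => Φ (x p.1) p.2

lemma fmonic : (X ^ 3 - X : Polynomial (ZMod 2)).Monic :=
  Polynomial.monic_X_pow_sub (by rw [degree_X]; norm_num)

def Tlin : R →ₗ[ZMod 2] ZMod 2 :=
  (Polynomial.lcoeff (ZMod 2) 2).comp (AdjoinRoot.modByMonicHom fmonic)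

lemma elt_eq_mk (a b c : ZMod 2) :
    elt a b c = AdjoinRoot.mk _ (C a + C b * X + C c * X ^ 2) := by
  simp [elt, u, map_add, map_mul, map_pow]
  rfl

lemma T_elt (a b c : ZMod 2) : Tlin (elt a b c) = c := by
  rw [elt_eq_mk]
  have hdeg : (C a + C b * X + C c * X ^ 2).degree < (X ^ 3 - X : Polynomial (ZMod 2)).degree := by
    have h3 : (X ^ 3 - X : Polynomial (ZMod 2)).degree = 3 := by
      compute_degree!
    rw [h3]
    apply lt_of_le_of_lt (degree_add_le _ _)
    simp only [max_lt_iff]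
    constructor
    · apply lt_of_le_of_lt (degree_add_le _ _)
      simp only [max_lt_iff]
      refine ⟨lt_of_le_of_lt degree_C_le (by norm_num), ?_⟩
      apply lt_of_le_of_lt (degree_mul_le _ _)
      calc (C b).degree + (X : Polynomial (ZMod 2)).degree ≤ 0 + 1 := add_le_add degree_C_le degree_X_le
        _ < 3 := by norm_num
    · apply lt_of_le_of_lt (degree_mul_le _ _)
      calc (C c).degree + ((X : Polynomial (ZMod 2)) ^ 2).degree ≤ 0 + 2 := by
            exact add_le_add degree_C_le (degree_pow_le _ _ |>.trans (by simpa using nsmul_le_nsmul_right degree_X_le 2))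
        _ < 3 := by norm_num
  show ((AdjoinRoot.modByMonicHom fmonic) (AdjoinRoot.mk _ _)).coeff 2 = c
  rw [AdjoinRoot.modByMonicHom_mk, (modByMonic_eq_self_iff fmonic).2 hdeg]
  simp [coeff_C, coeff_X]

lemma surj (r : R) : ∃ a b c, r = elt a b c := by
  obtain ⟨p, rfl⟩ := AdjoinRoot.mk_surjective (g := (X ^ 3 - X : Polynomial (ZMod 2))) r
  refine ⟨(p %ₘ (X ^ 3 - X)).coeff 0, (p %ₘ (X ^ 3 - X)).coeff 1, (p %ₘ (X ^ 3 - X)).coeff 2, ?_⟩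
  have h1 : AdjoinRoot.mk (X ^ 3 - X : Polynomial (ZMod 2)) p
      = AdjoinRoot.mk _ (p %ₘ (X ^ 3 - X)) := by
    rw [AdjoinRoot.mk_eq_mk, modByMonic_eq_sub_mul_div _ (X ^ 3 - X), sub_sub_cancel]
    exact Dvd.intro _ rfl
  rw [h1, elt_eq_mk]
  congr 1
  have hdeg : (p %ₘ (X ^ 3 - X)).degree < 3 := by
    have := degree_modByMonic_lt p fmonic
    have h3 : (X ^ 3 - X : Polynomial (ZMod 2)).degree = 3 := by compute_degree!
    rwa [h3] at this
  have hnd : (p %ₘ (X ^ 3 - X)).natDegree < 3 := by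
    by_cases h0 : p %ₘ (X ^ 3 - X) = 0
    · simp [h0]
    · exact natDegree_lt_iff_degree_lt h0 |>.2 (by exact_mod_cast hdeg)
  ext k
  rcases Nat.lt_or_ge k 3 with hk | hk
  · interval_cases k <;> simp [coeff_C, coeff_X]
  · rw [coeff_eq_zero_of_natDegree_lt (lt_of_lt_of_le hnd hk),
      coeff_eq_zero_of_natDegree_lt (lt_of_le_of_lt ?_ (lt_of_lt_of_le (by norm_num : (2:ℕ) < 3) hk))]
    apply le_trans (natDegree_add_le _ _)
    simp only [max_le_iff]
    refine ⟨le_trans (natDegree_add_le _ _) ?_, ?_⟩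
    · simp only [max_le_iff]
      exact ⟨le_trans (natDegree_C _).le (by norm_num), le_trans (natDegree_mul_le) (by simp [natDegree_C])⟩
    · exact le_trans (natDegree_mul_le) (by simp [natDegree_C, natDegree_pow])

lemma u3 : u ^ 3 = u := by
  have : (Ideal.Quotient.mk (Ideal.span ({X ^ 3 - X} : Set (Polynomial (ZMod 2))))) (X ^ 3 - X) = 0 := by
    rw [Ideal.Quotient.eq_zero_iff_mem]
    exact Ideal.subset_span rfl
  rw [map_sub, map_pow] at this
  exact sub_eq_zero.mp this

lemma elt_mul (a b c a' b' c' : ZMod 2) :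
    elt a b c * elt a' b' c'
      = elt (a * a') (a * b' + b * a' + b * c' + c * b')
          (a * c' + b * b' + c * a' + c * c') := by
  have hu : u ^ 3 = u := u3
  simp only [elt, map_add, map_mul]
  linear_combination (algebraMap (ZMod 2) R b * algebraMap (ZMod 2) R c' + algebraMap (ZMod 2) R c * algebraMap (ZMod 2) R b' + algebraMap (ZMod 2) R c * algebraMap (ZMod 2) R c' * u) * hu

lemma pointwise (a b c a' b' c' : ZMod 2) :
    a * a' + (a + c) * (a' + c') + b * b'
      = a * c' + b * b' + c * a' + c * c' := by
  revert a b c a' b' c'; decide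

/-- If a linear code `C` of length `n` over `R` is self-orthogonal, then so is its Gray
image `Φ(C)` with respect to the standard inner product over `ZMod 2`. -/
theorem grayImage_self_orthogonal (n : ℕ) (Φ : R → Fin 3 → ZMod 2) (hΦ : GraySpec Φ)
    (C : Submodule R (Fin n → R))
    (hso : ∀ x ∈ C, ∀ y ∈ C, ∑ i, x i * y i = 0) :
    ∀ x ∈ C, ∀ y ∈ C,
      ∑ p : Fin n × Fin 3, grayExt Φ n x p * grayExt Φ n y p = 0 := by
  intro x hx y hy
  rw [Fintype.sum_prod_type]
  have key : ∀ i, ∑ j : Fin 3, grayExt Φ n x (i, j) * grayExt Φ n y (i, j)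
      = Tlin (x i * y i) := by
    intro i
    obtain ⟨a, b, c, hxa⟩ := surj (x i)
    obtain ⟨a', b', c', hya⟩ := surj (y i)
    simp only [grayExt, hxa, hya, hΦ a b c, hΦ a' b' c']
    rw [elt_mul, T_elt, Fin.sum_univ_three]
    simpa using pointwise a b c a' b' c'
  calc ∑ i, ∑ j : Fin 3, grayExt Φ n x (i, j) * grayExt Φ n y (i, j)
      = ∑ i, Tlin (x i * y i) := by simp_rw [key]
    _ = Tlin (∑ i, x i * y i) := (map_sum Tlin _ _).symm
    _ = 0 := by rw [hso x hx y hy, map_zero]
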